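/- Let I, J be k-element subsets of {0,…,n−1} and let I_i^l be as defined (for 0 < l ≤ min{k,i}, i+k < n+l). Then min{I,J} ≤ I_i^l if and only if I ≤ I_i^l or J ≤ I_i^l. -/

import Mathlib

/-- The sorted list of elements of a finset of naturals, in increasing order. -/
def sortedList (I : Finset ℕ) : List ℕ := I.sort (· ≤ ·)

/-- The componentwise partial order on finsets of naturals. -/
def fle (I J : Finset ℕ) : Prop := List.Forall₂ (· ≤ ·) (sortedList I) (sortedList J)

/-- The componentwise minimum of two finsets of naturals. -/
def fmin (I J : Finset ℕ) : Finset ℕ :=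
  (List.zipWith min (sortedList I) (sortedList J)).toFinset

/-- The special `k`-subsets `I_i^l` of `{0, …, n-1}`:
`I_i^l = {i-l, …, i-1} ∪ {n-k+l, …, n-1}` when `i + k < n + l`, and
`I_i^l = {n-k, …, n-1}` otherwise. -/
def Iil (n k i l : ℕ) : Finset ℕ :=
  if i + k < n + l then Finset.Ico (i - l) i ∪ Finset.Ico (n - k + l) n
  else Finset.Ico (n - k) n

lemma sortedList_sorted (I : Finset ℕ) : (sortedList I).Pairwise (· < ·) :=
  (Finset.sortedLT_sort I).pairwise

lemma sortedList_length (I : Finset ℕ) : (sortedList I).length = I.card :=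
  Finset.length_sort _

/-- sortedList of the toFinset of a strictly sorted list is the list itself. -/
lemma sortedList_toFinset {L : List ℕ} (h : L.Pairwise (· < ·)) :
    sortedList L.toFinset = L :=
  (List.toFinset_sort (· ≤ ·) (h.imp ne_of_lt)).2 (h.imp le_of_lt)

/-- getElem inequality in a strictly sorted list of naturals. -/
lemma sorted_getElem_add_le (a : List ℕ) (h : a.Pairwise (· < ·)) (s t : ℕ)
    (hst : s ≤ t) (ht : t < a.length) :
    a[s]'(lt_of_le_of_lt hst ht) + (t - s) ≤ a[t]'ht := by
  induction t with
  | zero =>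
    interval_cases s
    simp
  | succ t ih =>
    rcases Nat.eq_or_lt_of_le hst with rfl | hst'
    · simp
    · have hs : s ≤ t := Nat.lt_succ_iff.mp hst'
      have h1 := ih hs (Nat.lt_of_succ_lt ht)
      have h2 : a[t]'(Nat.lt_of_succ_lt ht) < a[t+1]'ht :=
        List.pairwise_iff_getElem.mp h t (t+1) (Nat.lt_of_succ_lt ht) ht (Nat.lt_succ_self t)
      omega

lemma zipWith_min_sorted {a b : List ℕ} (ha : a.Pairwise (· < ·)) (hb : b.Pairwise (· < ·)) :
    (List.zipWith min a b).Pairwise (· < ·) := by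
  rw [List.pairwise_iff_getElem]
  intro s t hs ht hst
  simp only [List.length_zipWith, lt_min_iff] at hs ht
  rw [List.getElem_zipWith, List.getElem_zipWith]
  have h1 : a[s]'hs.1 < a[t]'ht.1 := List.pairwise_iff_getElem.mp ha s t hs.1 ht.1 hst
  have h2 : b[s]'hs.2 < b[t]'ht.2 := List.pairwise_iff_getElem.mp hb s t hs.2 ht.2 hst
  have := min_le_left (a[s]'hs.1) (b[s]'hs.2)
  have := min_le_right (a[s]'hs.1) (b[s]'hs.2)
  rcases min_choice (a[t]'ht.1) (b[t]'ht.2) with he | he <;> rw [he] <;> omega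

lemma sortedList_fmin {I J : Finset ℕ} :
    sortedList (fmin I J) = List.zipWith min (sortedList I) (sortedList J) :=
  sortedList_toFinset (zipWith_min_sorted (sortedList_sorted I) (sortedList_sorted J))

/-- `fle` in terms of getElem. -/
lemma fle_iff {I J : Finset ℕ} :
    fle I J ↔ (sortedList I).length = (sortedList J).length ∧
      ∀ t (h₁ : t < (sortedList I).length) (h₂ : t < (sortedList J).length),
        (sortedList I)[t] ≤ (sortedList J)[t] := by
  rw [fle, List.forall₂_iff_get]
  simp [List.get_eq_getElem]

/-- the sorted list of `Iil` in the first case. -/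
lemma sortedList_Iil₁ (n k i l : ℕ) (hkn : k ≤ n) (hlk : l ≤ k) (hli : l ≤ i) (hi : i < n)
    (hc : i + k < n + l) :
    sortedList (Iil n k i l) = List.range' (i - l) l ++ List.range' (n - k + l) (k - l) := by
  have hsorted : (List.range' (i - l) l ++ List.range' (n - k + l) (k - l)).Pairwise (· < ·) := by
    rw [List.pairwise_append]
    refine ⟨List.pairwise_lt_range', List.pairwise_lt_range', ?_⟩
    intro x hx y hy
    rw [List.mem_range'_1] at hx hy
    omega
  rw [Iil, if_pos hc, ← sortedList_toFinset hsorted]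
  congr 1
  ext x
  simp only [List.toFinset_append, Finset.mem_union, List.mem_toFinset, List.mem_range'_1,
    Finset.mem_Ico]
  omega

/-- the sorted list of `Iil` in the second case. -/
lemma sortedList_Iil₂ (n k i l : ℕ) (hkn : k ≤ n) (hc : ¬ i + k < n + l) :
    sortedList (Iil n k i l) = List.range' (n - k) k := by
  have hsorted : (List.range' (n - k) k).Pairwise (· < ·) := List.pairwise_lt_range'
  rw [Iil, if_neg hc, ← sortedList_toFinset hsorted]
  congr 1
  ext x
  simp only [List.mem_toFinset, List.mem_range'_1, Finset.mem_Ico]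
  omega

/-- Any `k`-subset of `range n` satisfies `a[t] ≤ n - k + t` componentwise. -/
lemma getElem_le_of_subset_range {I : Finset ℕ} {n k : ℕ} (hI : I ⊆ Finset.range n)
    (hIc : I.card = k) (t : ℕ) (ht : t < (sortedList I).length) :
    (sortedList I)[t] + k ≤ n + t := by
  have hlen : (sortedList I).length = k := by rw [sortedList_length, hIc]
  have hklast : k - 1 < (sortedList I).length := by omega
  have h1 := sorted_getElem_add_le _ (sortedList_sorted I) t (k - 1) (by omega) hklast
  have h2 : (sortedList I)[k-1]'hklast < n := by
    have : (sortedList I)[k-1]'hklast ∈ I :=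
      (Finset.mem_sort (· ≤ ·)).mp (List.getElem_mem _)
    exact Finset.mem_range.mp (hI this)
  omega

theorem stmt2 (n k : ℕ) (hk : 0 < k) (hkn : k ≤ n)
    (I J : Finset ℕ) (hI : I ⊆ Finset.range n) (hJ : J ⊆ Finset.range n)
    (hIc : I.card = k) (hJc : J.card = k)
    (i l : ℕ) (hi : i < n) (hl : 0 < l) (hlk : l ≤ k) (hli : l ≤ i) :
    fle (fmin I J) (Iil n k i l) ↔ fle I (Iil n k i l) ∨ fle J (Iil n k i l) := by
  have haI : (sortedList I).length = k := by rw [sortedList_length, hIc]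
  have haJ : (sortedList J).length = k := by rw [sortedList_length, hJc]
  have hmin : (sortedList (fmin I J)).length = k := by
    rw [sortedList_fmin, List.length_zipWith, haI, haJ, min_self]
  -- componentwise bound for fmin: min a b ≤ a elementwise
  have hminle : ∀ (X : Finset ℕ) (hXr : X ⊆ Finset.range n) (hXc : X.card = k)
      (t : ℕ) (ht : t < (sortedList X).length),
      (sortedList X)[t] + k ≤ n + t := fun X hXr hXc => getElem_le_of_subset_range hXr hXc
  by_cases hc : i + k < n + l
  · -- First case. Key: fle X (Iil) ↔ x[l-1] < i.
    have key : ∀ (X : Finset ℕ) (hXlen : (sortedList X).length = k),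
        (∀ t (ht : t < (sortedList X).length), (sortedList X)[t] + k ≤ n + t) →
        (fle X (Iil n k i l) ↔ (sortedList X)[l-1]'(by omega) < i) := by
      intro X hXlen hXb
      rw [fle_iff, sortedList_Iil₁ n k i l hkn hlk hli hi hc]
      have hclen : (List.range' (i - l) l ++ List.range' (n - k + l) (k - l)).length = k := by
        simp only [List.length_append, List.length_range']
        omega
      constructor
      · rintro ⟨hlen, h⟩
        have hgl : l - 1 < (List.range' (i - l) l).length := by
          simp only [List.length_range']; omega
        have := h (l-1) (by omega) (by omega)
        rw [List.getElem_append_left hgl, List.getElem_range'] at this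
        omega
      · intro hx
        refine ⟨by omega, fun t ht₁ ht₂ => ?_⟩
        by_cases htl : t < l
        · have hgl : t < (List.range' (i - l) l).length := by
            simp only [List.length_range']; omega
          rw [List.getElem_append_left hgl, List.getElem_range']
          have := sorted_getElem_add_le _ (sortedList_sorted X) t (l-1) (by omega) (by omega)
          omega
        · have hgl : (List.range' (i - l) l).length ≤ t := by
            simp only [List.length_range']; omega
          rw [List.getElem_append_right hgl, List.getElem_range']
          have := hXb t ht₁
          simp only [List.length_range']
          omega
    have hminsub : fmin I J ⊆ Finset.range n := by
      intro x hx
      rw [fmin, List.mem_toFinset] at hx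
      obtain ⟨t, ht, rfl⟩ := List.mem_iff_getElem.mp hx
      have ht' : t < (sortedList I).length := by
        simp only [List.length_zipWith, lt_min_iff] at ht; exact ht.1
      rw [List.getElem_zipWith]
      have hmem : (sortedList I)[t] ∈ I := (Finset.mem_sort (· ≤ ·)).mp (List.getElem_mem _)
      have := Finset.mem_range.mp (hI hmem)
      simp only [Finset.mem_range]
      have := min_le_left ((sortedList I)[t]) ((sortedList J)[t]'(by
        simp only [List.length_zipWith, lt_min_iff] at ht; exact ht.2))
      omega
    have hmincard : (fmin I J).card = k := by
      have := sortedList_length (fmin I J)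
      omega
    rw [key _ hmin (hminle _ hminsub hmincard), key _ haI (hminle _ hI hIc),
      key _ haJ (hminle _ hJ hJc)]
    have hgE : (sortedList (fmin I J))[l-1]'(by omega) =
        min ((sortedList I)[l-1]'(by omega)) ((sortedList J)[l-1]'(by omega)) := by
      simp only [sortedList_fmin]
      rw [List.getElem_zipWith]
    rw [hgE, min_lt_iff]
  · -- Second case: everything is ≤ Iil = {n-k, …, n-1}.
    have key : ∀ (X : Finset ℕ) (hXlen : (sortedList X).length = k),
        (∀ t (ht : t < (sortedList X).length), (sortedList X)[t] + k ≤ n + t) →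
        fle X (Iil n k i l) := by
      intro X hXlen hXb
      rw [fle_iff, sortedList_Iil₂ n k i l hkn hc]
      refine ⟨by simp [hXlen], fun t ht₁ ht₂ => ?_⟩
      rw [List.getElem_range']
      have := hXb t ht₁
      omega
    have hminsub : fmin I J ⊆ Finset.range n := by
      intro x hx
      rw [fmin, List.mem_toFinset] at hx
      obtain ⟨t, ht, rfl⟩ := List.mem_iff_getElem.mp hx
      have ht' : t < (sortedList I).length := by
        simp only [List.length_zipWith, lt_min_iff] at ht; exact ht.1
      rw [List.getElem_zipWith]
      have hmem : (sortedList I)[t] ∈ I := (Finset.mem_sort (· ≤ ·)).mp (List.getElem_mem _)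
      have := Finset.mem_range.mp (hI hmem)
      simp only [Finset.mem_range]
      have := min_le_left ((sortedList I)[t]) ((sortedList J)[t]'(by
        simp only [List.length_zipWith, lt_min_iff] at ht; exact ht.2))
      omega
    have hmincard : (fmin I J).card = k := by
      have := sortedList_length (fmin I J)
      omega
    refine ⟨fun _ => Or.inl (key _ haI (hminle _ hI hIc)),
      fun _ => key _ hmin (hminle _ hminsub hmincard)⟩
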